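/- Let m ≥ 1, let n : Fin m → ℕ with N = ∑_j n j ≥ 1, and let Δ = gcd_j (n j). Then the coefficient of the monomial X₁^{n 1} ⋯ X_m^{n m} in the cycle-index sum ∑_{g ∣ N} φ(g) · (X₁^g + ⋯ + X_m^g)^{N/g} over ℚ equals ∑_{d ∣ Δ} φ(d) · P(n/d), where P(n/d) = (N/d)! / ∏_j (n j / d)!. -/

import Mathlib

open Finset MvPolynomial

lemma prod_X_pow_univ {m : ℕ} (f : Fin m →₀ ℕ) :
    ∏ j, (MvPolynomial.X j : MvPolynomial (Fin m) ℚ) ^ f j = monomial f 1 := by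
  rw [← prod_X_pow_eq_monomial]
  exact (Finset.prod_subset (subset_univ _) (by
    intro x _ hx
    simp [Finsupp.notMem_support_iff.mp hx])).symm

lemma coeff_sum_X_pow {m : ℕ} (n : Fin m → ℕ) (N g : ℕ) (hN : N = ∑ j, n j)
    (hg : g ≠ 0) :
    MvPolynomial.coeff (Finsupp.equivFunOnFinite.symm n)
      ((∑ j, (MvPolynomial.X j : MvPolynomial (Fin m) ℚ) ^ g) ^ (N / g)) =
      if ∀ j, g ∣ n j then (Nat.multinomial Finset.univ (fun j => n j / g) : ℚ) else 0 := by
  rw [Finset.sum_pow_eq_sum_piAntidiag, MvPolynomial.coeff_sum]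
  have key : ∀ k : Fin m → ℕ,
      MvPolynomial.coeff (Finsupp.equivFunOnFinite.symm n)
        ((Nat.multinomial univ k : MvPolynomial (Fin m) ℚ) * ∏ j, (X j ^ g) ^ k j) =
      if (∀ j, n j = g * k j) then (Nat.multinomial univ k : ℚ) else 0 := by
    intro k
    simp_rw [← pow_mul]
    have hmono := prod_X_pow_univ (Finsupp.equivFunOnFinite.symm (fun j => g * k j))
    simp only [Finsupp.coe_equivFunOnFinite_symm] at hmono
    rw [hmono, ← MvPolynomial.C_eq_coe_nat, MvPolynomial.coeff_C_mul,
      MvPolynomial.coeff_monomial]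
    have heq : (Finsupp.equivFunOnFinite.symm (fun j => g * k j) =
        Finsupp.equivFunOnFinite.symm n) ↔ ∀ j, n j = g * k j := by
      rw [EmbeddingLike.apply_eq_iff_eq, eq_comm, _root_.funext_iff]
    simp only [heq]
    split_ifs <;> simp
  simp_rw [key]
  by_cases h : ∀ j, g ∣ n j
  · rw [if_pos h]
    set k₀ : Fin m → ℕ := fun j => n j / g with hk₀
    have hsum : ∑ j, k₀ j = N / g := by
      symm
      apply Nat.div_eq_of_eq_mul_left (Nat.pos_of_ne_zero hg)
      rw [hN, Finset.sum_mul]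
      exact (Finset.sum_congr rfl fun j _ => (Nat.div_mul_cancel (h j)).symm)
    have hmem : k₀ ∈ piAntidiag univ (N / g) := by
      rw [Finset.mem_piAntidiag]
      exact ⟨hsum, fun i _ => Finset.mem_univ i⟩
    rw [Finset.sum_eq_single_of_mem k₀ hmem]
    · rw [if_pos (fun j => (Nat.mul_div_cancel' (h j)).symm)]
    · intro k _ hk
      rw [if_neg]
      intro hc
      exact hk (funext fun j => by
        rw [hk₀]; simp only; rw [hc j, Nat.mul_div_cancel_left _ (Nat.pos_of_ne_zero hg)])
  · rw [if_neg h]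
    refine Finset.sum_eq_zero fun k _ => ?_
    rw [if_neg]
    intro hc
    exact h fun j => ⟨k j, hc j⟩

theorem coeff_cycle_index_sum (m : ℕ) (hm : 1 ≤ m) (n : Fin m → ℕ)
    (N : ℕ) (hN : N = ∑ j, n j) (hN1 : 1 ≤ N) :
    MvPolynomial.coeff (Finsupp.equivFunOnFinite.symm n)
      (∑ g ∈ N.divisors, (Nat.totient g : MvPolynomial (Fin m) ℚ) *
        (∑ j, (MvPolynomial.X j : MvPolynomial (Fin m) ℚ) ^ g) ^ (N / g)) =
      ∑ d ∈ (Finset.univ.gcd n).divisors,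
        (Nat.totient d : ℚ) * (Nat.multinomial Finset.univ (fun j => n j / d) : ℚ) := by
  rw [MvPolynomial.coeff_sum]
  have step : ∀ g ∈ N.divisors,
      MvPolynomial.coeff (Finsupp.equivFunOnFinite.symm n)
        ((Nat.totient g : MvPolynomial (Fin m) ℚ) *
          (∑ j, (MvPolynomial.X j : MvPolynomial (Fin m) ℚ) ^ g) ^ (N / g)) =
      if ∀ j, g ∣ n j then
        (Nat.totient g : ℚ) * (Nat.multinomial Finset.univ (fun j => n j / g) : ℚ) else 0 := by
    intro g hg
    have hg0 : g ≠ 0 := fun h => by simp [h] at hg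
    rw [← MvPolynomial.C_eq_coe_nat, MvPolynomial.coeff_C_mul, coeff_sum_X_pow n N g hN hg0, mul_ite, mul_zero]
  rw [Finset.sum_congr rfl step, Finset.sum_ite, Finset.sum_const_zero, add_zero]
  apply Finset.sum_congr _ (fun _ _ => rfl)
  ext d
  simp only [Finset.mem_filter, Nat.mem_divisors]
  constructor
  · rintro ⟨⟨hdN, hN0⟩, hdn⟩
    refine ⟨Finset.dvd_gcd (fun j _ => hdn j), ?_⟩
    intro hΔ0
    apply hN0
    rw [hN]
    refine Finset.sum_eq_zero fun j _ => ?_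
    have := Finset.gcd_dvd (f := n) (Finset.mem_univ j)
    rw [hΔ0] at this
    exact Nat.eq_zero_of_zero_dvd this
  · rintro ⟨hdΔ, hΔ0⟩
    have hdn : ∀ j, d ∣ n j := fun j => hdΔ.trans (Finset.gcd_dvd (Finset.mem_univ j))
    exact ⟨⟨hN ▸ Finset.dvd_sum (fun j _ => hdn j), Nat.one_le_iff_ne_zero.mp hN1⟩, hdn⟩
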